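/- Let E, R be finite sets with embeddings e : E → ℝ^d and w : R → ℝ^d, and let φ(s,r,o) = ∑_i e(s)_i w(r)_i e(o)_i be the CP score. Then the partition function of the squared score satisfies ∑_{s∈E} ∑_{r∈R} ∑_{o∈E} φ(s,r,o)² = ∑_{i=1}^d ∑_{j=1}^d A_{ij} B_{ij} A'_{ij}, where A_{ij} = ∑_{s∈E} e(s)_i e(s)_j (using subject embeddings), B_{ij} = ∑_{r∈R} w(r)_i w(r)_j, and A'_{ij} = ∑_{o∈E} e(o)_i e(o)_j (using object embeddings). (If subject and object embedding maps differ, use the respective Gram matrices.) -/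
import Mathlib

lemma sum_swap5 {E R I : Type*} [Fintype E] [Fintype R] [Fintype I]
    (f : E → R → E → I → I → ℝ) :
    (∑ s : E, ∑ r : R, ∑ o : E, ∑ i : I, ∑ j : I, f s r o i j)
      = ∑ i : I, ∑ j : I, ∑ o : E, ∑ r : R, ∑ s : E, f s r o i j := by
  rw [show (∑ s : E, ∑ r : R, ∑ o : E, ∑ i : I, ∑ j : I, f s r o i j)
      = ∑ s : E, ∑ r : R, ∑ i : I, ∑ j : I, ∑ o : E, f s r o i j from
    Finset.sum_congr rfl fun s _ => Finset.sum_congr rfl fun r _ => by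
      rw [Finset.sum_comm]; exact Finset.sum_congr rfl fun i _ => Finset.sum_comm]
  rw [show (∑ s : E, ∑ r : R, ∑ i : I, ∑ j : I, ∑ o : E, f s r o i j)
      = ∑ s : E, ∑ i : I, ∑ j : I, ∑ o : E, ∑ r : R, f s r o i j from
    Finset.sum_congr rfl fun s _ => by
      rw [Finset.sum_comm]; exact Finset.sum_congr rfl fun i _ => by
        rw [Finset.sum_comm]; exact Finset.sum_congr rfl fun j _ => Finset.sum_comm]
  rw [Finset.sum_comm]
  exact Finset.sum_congr rfl fun i _ => by
    rw [Finset.sum_comm]; exact Finset.sum_congr rfl fun j _ => by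
      rw [Finset.sum_comm]; exact Finset.sum_congr rfl fun o _ => Finset.sum_comm

theorem squared_cp_partition_function_gram
    {E R : Type*} [Fintype E] [Fintype R] (d : ℕ)
    (eS : E → Fin d → ℝ) (eO : E → Fin d → ℝ) (w : R → Fin d → ℝ) :
    ∑ s : E, ∑ r : R, ∑ o : E,
        (∑ i : Fin d, eS s i * w r i * eO o i) ^ 2 =
      ∑ i : Fin d, ∑ j : Fin d,
        (∑ s : E, eS s i * eS s j) * (∑ r : R, w r i * w r j) *
          (∑ o : E, eO o i * eO o j) := by
  simp only [sq, Finset.sum_mul_sum, Finset.mul_sum, Finset.sum_mul]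
  rw [sum_swap5 (fun s r o i j => eS s j * w r j * eO o j * (eS s i * w r i * eO o i))]
  refine Finset.sum_congr rfl fun i _ => Finset.sum_congr rfl fun j _ =>
    Finset.sum_congr rfl fun o _ => Finset.sum_congr rfl fun r _ =>
    Finset.sum_congr rfl fun s _ => by ring
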